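/- The rule-based contension inconsistency measure I^RB_c satisfies Rule Consistency: I^RB_c(B) = 0 if and only if R(B) ∪ F' is consistent for every consistent subset F' of the facts F(B). -/

import Mathlib

open scoped Classical

/-- A rule over atoms `A`: literals are pairs (atom, sign). -/
structure Rule (A : Type*) where
  body : Finset (A × Bool)
  head : A × Bool
deriving DecidableEq

abbrev RuleBase (A : Type*) := Finset (Rule A)

variable {A : Type*}

/-- The complement of a literal. -/
def litCompl (l : A × Bool) : A × Bool := (l.1, !l.2)

/-- The fact with head `l` (empty body). -/
def factR (l : A × Bool) : Rule A := ⟨∅, l⟩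

/-- The facts (empty-body rules) of a rule base. -/
noncomputable def facts [DecidableEq A] (B : RuleBase A) : RuleBase A :=
  B.filter (fun r => r.body = ∅)

/-- The proper (non-fact) rules of a rule base. -/
noncomputable def properRules [DecidableEq A] (B : RuleBase A) : RuleBase A :=
  B.filter (fun r => r.body ≠ ∅)

/-- A set of literals is closed w.r.t. a rule base. -/
def Closed (B : RuleBase A) (M : Set (A × Bool)) : Prop :=
  ∀ r ∈ B, (↑r.body ⊆ M) → r.head ∈ M

/-- The minimal model: the smallest closed set of literals. -/
def minModel (B : RuleBase A) : Set (A × Bool) :=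
  {l | ∀ M : Set (A × Bool), Closed B M → l ∈ M}

/-- A set of literals is consistent if it contains no complementary pair. -/
def ConsistentLits (M : Set (A × Bool)) : Prop :=
  ¬ ∃ a : A, (a, true) ∈ M ∧ (a, false) ∈ M

/-- A rule base is consistent if its minimal model is consistent. -/
def Consistent (B : RuleBase A) : Prop := ConsistentLits (minModel B)

/-- The minimal inconsistent subsets of a rule base. -/
def MI (B : RuleBase A) : Set (RuleBase A) :=
  { M | M ⊆ B ∧ ¬ Consistent M ∧ ∀ M' ⊂ M, Consistent M' }

/-- `M` contains a complementary pair of facts. -/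
def hasComplFactPair (M : RuleBase A) : Prop :=
  ∃ a : A, factR (a, true) ∈ M ∧ factR (a, false) ∈ M

/-- Minimal inconsistent subsets containing no complementary pair of facts. -/
def MIF (B : RuleBase A) : Set (RuleBase A) :=
  { M ∈ MI B | ¬ hasComplFactPair M }

/-- A formula is free in a rule base if it belongs to no minimal inconsistent subset. -/
def Free (r : Rule A) (B : RuleBase A) : Prop := ∀ M ∈ MI B, r ∉ M

/-- Rule consistency: the rules together with any consistent set of facts are consistent. -/
def RuleConsistent [DecidableEq A] (B : RuleBase A) : Prop :=
  ∀ F' ⊆ facts B, Consistent F' → Consistent (properRules B ∪ F')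

/-- The drastic inconsistency measure. -/
noncomputable def Idr (B : RuleBase A) : ℕ := if Consistent B then 0 else 1

/-- The rule-based drastic inconsistency measure. -/
noncomputable def IRBd (B : RuleBase A) : ℕ := if MIF B = ∅ then 0 else 1

/-- The rule-based MI-inconsistency measure. -/
noncomputable def IRBMI (B : RuleBase A) : ℕ := (MIF B).ncard

/-- The rule-based problematic inconsistency measure: number of distinct
    non-fact rules occurring in some element of `MIF B`. -/
noncomputable def IRBp (B : RuleBase A) : ℕ :=
  {r : Rule A | r.body ≠ ∅ ∧ ∃ M ∈ MIF B, r ∈ M}.ncard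

/-- Three truth values. -/
inductive TV | t | b | f
deriving DecidableEq

def TV.negv : TV → TV
  | .t => .f
  | .f => .t
  | .b => .b

/-- Value of a literal under a three-valued interpretation. -/
def litVal (v : A → TV) (l : A × Bool) : TV :=
  if l.2 then v l.1 else (v l.1).negv

/-- Designated truth values. -/
def TV.des : TV → Prop
  | .f => False
  | _ => True

/-- Three-valued satisfaction of a rule. -/
def sat3 (v : A → TV) (r : Rule A) : Prop :=
  (∀ l ∈ r.body, (litVal v l).des) → (litVal v r.head).des

/-- The rule-based contension inconsistency measure. -/
noncomputable def IRBc (B : RuleBase A) : ℕ :=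
  sInf { n : ℕ | ∃ v : A → TV,
    (∀ M ∈ MIF B, ∀ r ∈ M, sat3 v r) ∧ n = {a : A | v a = TV.b}.ncard }

/-- The payoff of `α` in coalition `C` (w.r.t. rule base `B` and measure `I`). -/
noncomputable def CoalPayoff [DecidableEq A] (I : RuleBase A → ℝ) (B : RuleBase A)
    (α : Rule A) (C : RuleBase A) : ℝ :=
  ((Nat.factorial (C.card - 1) * Nat.factorial (B.card - C.card) : ℕ) : ℝ)
    / ((Nat.factorial B.card : ℕ) : ℝ) * (I C - I (C.erase α))

/-- The additional payoff shifted from facts to non-free rules. -/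
noncomputable def AddPayoff [DecidableEq A] (I : RuleBase A → ℝ) (B : RuleBase A)
    (r : Rule A) (C : RuleBase A) : ℝ :=
  if Free r C then 0
  else (∑ f ∈ C.filter (fun x => x.body = ∅), CoalPayoff I B f C)
        / ((C.filter (fun x => x.body ≠ ∅ ∧ ¬ Free x C)).card : ℝ)

/-- The adjusted Shapley inconsistency value. -/
noncomputable def Sstar [DecidableEq A] (I : RuleBase A → ℝ) (B : RuleBase A)
    (α : Rule A) : ℝ :=
  if α.body = ∅ then 0
  else ∑ C ∈ B.powerset, (CoalPayoff I B α C + AddPayoff I B α C)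

lemma minModel_mono {B1 B2 : RuleBase A} (h : B1 ⊆ B2) :
    minModel B1 ⊆ minModel B2 := fun l hl M hM =>
  hl M (fun r hr hb => hM r (h hr) hb)

lemma consistent_mono {B1 B2 : RuleBase A} (h : B1 ⊆ B2) (h2 : Consistent B2) :
    Consistent B1 := fun ⟨a, ha, hb⟩ =>
  h2 ⟨a, minModel_mono h ha, minModel_mono h hb⟩

lemma exists_MI [DecidableEq A] {B M : RuleBase A} (hMB : M ⊆ B) (hM : ¬ Consistent M) :
    ∃ M' ∈ MI B, M' ⊆ M := by
  classical
  have hne : (M.powerset.filter (fun N => ¬ Consistent N)).Nonempty :=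
    ⟨M, by simp [hM]⟩
  obtain ⟨N, hN, hmin⟩ : ∃ N ∈ M.powerset.filter (fun N => ¬ Consistent N),
      ∀ x ∈ M.powerset.filter (fun N => ¬ Consistent N), ¬ x < N := by
    obtain ⟨N, hN⟩ := Finset.exists_minimal hne
    exact ⟨N, hN.1, fun x hx hlt => lt_irrefl _ (lt_of_lt_of_le hlt (hN.2 hx hlt.le))⟩
  simp only [Finset.mem_filter, Finset.mem_powerset] at hN
  refine ⟨N, ⟨hN.1.trans hMB, hN.2, ?_⟩, hN.1⟩
  intro N' hN'
  by_contra hc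
  exact hmin N' (by simp [Finset.mem_filter, Finset.mem_powerset, hc,
    hN'.subset.trans hN.1]) hN'

lemma fact_eq {r : Rule A} (h : r.body = ∅) : r = factR r.head := by
  cases r; simp_all [factR]

lemma MIF_empty_iff_ruleConsistent [DecidableEq A] (B : RuleBase A) :
    MIF B = ∅ ↔ RuleConsistent B := by
  constructor
  · intro hMIF F' hF' hconsF'
    by_contra hinc
    have hsubB : properRules B ∪ F' ⊆ B := by
      intro r hr
      rcases Finset.mem_union.mp hr with h | h
      · exact Finset.mem_filter.mp h |>.1
      · exact Finset.mem_filter.mp (hF' h) |>.1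
    obtain ⟨M, hMmi, hMsub⟩ := exists_MI hsubB hinc
    -- M has no complementary fact pair, so M ∈ MIF B = ∅
    have hno : ¬ hasComplFactPair M := by
      rintro ⟨a, hat, haf⟩
      -- both facts are in F'
      have hFt : factR (a, true) ∈ F' := by
        rcases Finset.mem_union.mp (hMsub hat) with h | h
        · simp [properRules, factR] at h
        · exact h
      have hFf : factR (a, false) ∈ F' := by
        rcases Finset.mem_union.mp (hMsub haf) with h | h
        · simp [properRules, factR] at h
        · exact h
      -- then minModel F' contains the complementary pair
      have h1 : ((a, true) : A × Bool) ∈ minModel F' :=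
        fun S hS => hS _ hFt (by simp [factR])
      have h2 : ((a, false) : A × Bool) ∈ minModel F' :=
        fun S hS => hS _ hFf (by simp [factR])
      exact hconsF' ⟨a, h1, h2⟩
    have hmem : M ∈ MIF B := ⟨hMmi, hno⟩
    rw [hMIF] at hmem
    exact hmem
  · intro hRC
    ext M
    simp only [Set.mem_empty_iff_false, iff_false]
    rintro ⟨⟨hMB, hMinc, _⟩, hnoPair⟩
    apply hMinc
    -- F' := facts M is a consistent subset of facts B
    have hFsub : facts M ⊆ facts B :=
      fun r hr => Finset.mem_filter.mpr
        ⟨hMB (Finset.mem_filter.mp hr).1, (Finset.mem_filter.mp hr).2⟩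
    have hFcons : Consistent (facts M) := by
      rintro ⟨a, h1, h2⟩
      -- minModel (facts M) ⊆ {l | factR l ∈ facts M}
      have hclosed : Closed (facts M) {l | factR l ∈ facts M} := by
        intro r hr _
        have hb : r.body = ∅ := (Finset.mem_filter.mp hr).2
        have := fact_eq hb
        simpa [Set.mem_setOf_eq, ← this] using hr
      have ht := h1 _ hclosed
      have hf := h2 _ hclosed
      exact hnoPair ⟨a, (Finset.mem_filter.mp ht).1, (Finset.mem_filter.mp hf).1⟩
    have hcons := hRC (facts M) hFsub hFcons
    refine consistent_mono ?_ hcons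
    intro r hr
    by_cases hb : r.body = ∅
    · exact Finset.mem_union_right _ (Finset.mem_filter.mpr ⟨hr, hb⟩)
    · exact Finset.mem_union_left _ (Finset.mem_filter.mpr ⟨hMB hr, hb⟩)

theorem stmt8 [DecidableEq A] [Fintype A] (B : RuleBase A) :
    IRBc B = 0 ↔ RuleConsistent B := by
  rw [← MIF_empty_iff_ruleConsistent]
  constructor
  · intro h0
    -- IRBc B = 0 gives a valuation with no `b` atoms satisfying all M ∈ MIF B
    have hne : { n : ℕ | ∃ v : A → TV,
        (∀ M ∈ MIF B, ∀ r ∈ M, sat3 v r) ∧ n = {a : A | v a = TV.b}.ncard }.Nonempty := by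
      refine ⟨{a : A | (fun _ => TV.b) a = TV.b}.ncard, fun _ => TV.b, ?_, rfl⟩
      intro M _ r _ _
      unfold litVal
      cases r.head.2 <;> simp [TV.des, TV.negv]
    have h0' : 0 ∈ { n : ℕ | ∃ v : A → TV,
        (∀ M ∈ MIF B, ∀ r ∈ M, sat3 v r) ∧ n = {a : A | v a = TV.b}.ncard } := by
      rcases (Nat.sInf_eq_zero.mp h0) with h | h
      · exact h
      · exact absurd h (Set.nonempty_iff_ne_empty.mp hne)
    obtain ⟨v, hsat, hcard⟩ := h0'
    have hnob : ∀ a : A, v a ≠ TV.b := by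
      intro a ha
      have hfin : ({a : A | v a = TV.b}).Finite := Set.toFinite _
      have : ({a : A | v a = TV.b}) = ∅ := (Set.ncard_eq_zero hfin).mp hcard.symm
      exact absurd (this ▸ ha : a ∈ (∅ : Set A)) (by simp)
    ext M
    simp only [Set.mem_empty_iff_false, iff_false]
    intro hM
    have hMinc := hM.1.2.1
    apply hMinc
    -- S_v is a consistent closed set, so minModel M is consistent
    set S : Set (A × Bool) := {l | (litVal v l).des} with hS
    have hclosed : Closed M S := by
      intro r hr hb
      exact hsat M hM r hr (fun l hl => hb hl)
    rintro ⟨a, h1, h2⟩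
    have ht : ((a, true) : A × Bool) ∈ S := h1 S hclosed
    have hf : ((a, false) : A × Bool) ∈ S := h2 S hclosed
    simp only [hS, Set.mem_setOf_eq, litVal] at ht hf
    have := hnob a
    cases hva : v a <;> simp [hva, TV.des, TV.negv] at ht hf this
  · intro hMIF
    apply Nat.sInf_eq_zero.mpr
    left
    refine ⟨fun _ => TV.t, ?_, ?_⟩
    · intro M hM
      rw [hMIF] at hM
      exact absurd hM (by simp)
    · symm
      simp [Set.ncard_eq_zero]
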